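/- Let p ∈ [0,1], d ≥ 2, α ∈ [0, 1/d], and consider the real symmetric matrix A of size d² whose upper-left 2×2 block is [[p/d² + 1 - p - α, -√(α(1-α))],[-√(α(1-α)), p/d² - 1 + α]] and whose remaining diagonal entries all equal p/d². Then the eigenvalues of A are p/d² - p/2 ± ½√((2-p)² - 4α(1-p)), each with multiplicity 1, and p/d² with multiplicity d² - 2; moreover the radicand (2-p)² - 4α(1-p) is nonnegative. -/

import Mathlib

open Matrix
open Polynomial

variable {R : Type*} [CommRing R] {n : Type*} [DecidableEq n] [Fintype n]

lemma my_charpoly_conj (U V M : Matrix n n R) (hUV : U * V = 1) :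
    (U * M * V).charpoly = M.charpoly := by
  have hcm : charmatrix (U * M * V) =
      (C : R →+* R[X]).mapMatrix U * charmatrix M * (C : R →+* R[X]).mapMatrix V := by
    simp only [charmatrix, mul_sub, sub_mul]
    congr 1
    · rw [← (scalar_commute (X : R[X]) (Commute.all X) ((C : R →+* R[X]).mapMatrix U)).eq,
        mul_assoc, ← _root_.map_mul, hUV, _root_.map_one, mul_one]
    · rw [← _root_.map_mul, ← _root_.map_mul]
  have h1 : ((C : R →+* R[X]).mapMatrix U).det * ((C : R →+* R[X]).mapMatrix V).det = 1 := by
    rw [← det_mul, ← _root_.map_mul, hUV, _root_.map_one, det_one]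
  unfold Matrix.charpoly
  rw [hcm, det_mul, det_mul]
  calc ((C : R →+* R[X]).mapMatrix U).det * (charmatrix M).det * ((C : R →+* R[X]).mapMatrix V).det
      = (charmatrix M).det * (((C : R →+* R[X]).mapMatrix U).det * ((C : R →+* R[X]).mapMatrix V).det) := by ring
    _ = (charmatrix M).det := by rw [h1, mul_one]

lemma my_charpoly_diagonal (v : n → R) : (diagonal v).charpoly = ∏ i, (X - C (v i)) := by
  have h : charmatrix (diagonal v) = diagonal (fun i => X - C (v i)) := by
    ext i j
    rcases eq_or_ne i j with rfl | h
    · simp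
    · simp [charmatrix_apply_ne _ _ _ h, diagonal_apply_ne _ h]
  rw [Matrix.charpoly, h, det_diagonal]

lemma herm_charpoly {m : ℕ} (A : Matrix (Fin m) (Fin m) ℝ) (hA : A.IsHermitian) :
    A.charpoly = ∏ i, (X - C (hA.eigenvalues i)) := by
  have hU : (hA.eigenvectorUnitary : Matrix (Fin m) (Fin m) ℝ) *
      star (hA.eigenvectorUnitary : Matrix (Fin m) (Fin m) ℝ) = 1 :=
    (Unitary.mem_iff.mp hA.eigenvectorUnitary.2).2
  have hdiag : (diagonal (RCLike.ofReal ∘ hA.eigenvalues) : Matrix (Fin m) (Fin m) ℝ)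
      = diagonal hA.eigenvalues := by
    congr 1
  calc A.charpoly
      = ((hA.eigenvectorUnitary : Matrix (Fin m) (Fin m) ℝ) *
          diagonal (RCLike.ofReal ∘ hA.eigenvalues) *
          star (hA.eigenvectorUnitary : Matrix (Fin m) (Fin m) ℝ)).charpoly := by
        exact congrArg Matrix.charpoly hA.spectral_theorem
    _ = (diagonal (RCLike.ofReal ∘ hA.eigenvalues) : Matrix (Fin m) (Fin m) ℝ).charpoly :=
        my_charpoly_conj _ _ _ hU
    _ = ∏ i, (X - C (hA.eigenvalues i)) := by rw [hdiag, my_charpoly_diagonal]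



/-- Eigenvalues of the matrix `A = ρ_iso - |φ⟩⟨φ|` written in the basis determined by the
maximally entangled state: the `d² × d²` real symmetric matrix with upper-left block
`[[p/d² + 1 - p - α, -√(α(1-α))], [-√(α(1-α)), p/d² - 1 + α]]` and remaining diagonal
entries `p/d²` has eigenvalues `p/d² - p/2 ± ½√((2-p)² - 4α(1-p))` (each once) and
`p/d²` with multiplicity `d² - 2`; moreover the radicand is nonnegative. -/
theorem isotropic_minus_pure_eigenvalues (d : ℕ) (hd : 2 ≤ d) (p α : ℝ)
    (hp0 : 0 ≤ p) (hp1 : p ≤ 1) (hα0 : 0 ≤ α) (hα1 : α ≤ 1/(d : ℝ))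
    (A : Matrix (Fin (d^2)) (Fin (d^2)) ℝ)
    (hAdef : A = Matrix.of (fun i j : Fin (d^2) =>
      if i.val = 0 ∧ j.val = 0 then p/(d : ℝ)^2 + 1 - p - α
      else if (i.val = 0 ∧ j.val = 1) ∨ (i.val = 1 ∧ j.val = 0) then
        -Real.sqrt (α*(1-α))
      else if i.val = 1 ∧ j.val = 1 then p/(d : ℝ)^2 - 1 + α
      else if i = j then p/(d : ℝ)^2 else 0))
    (hA : A.IsHermitian) :
    0 ≤ (2-p)^2 - 4*α*(1-p) ∧
    Finset.univ.val.map hA.eigenvalues =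
      (p/(d : ℝ)^2 - p/2 + (1/2)*Real.sqrt ((2-p)^2 - 4*α*(1-p))) ::ₘ
      (p/(d : ℝ)^2 - p/2 - (1/2)*Real.sqrt ((2-p)^2 - 4*α*(1-p))) ::ₘ
      Multiset.replicate (d^2 - 2) (p/(d : ℝ)^2) := by
  have hd4 : 4 ≤ d^2 := by nlinarith
  have hdR : (2:ℝ) ≤ (d:ℝ) := by exact_mod_cast hd
  have hα2 : α ≤ 1/2 := le_trans hα1 (by rw [div_le_div_iff₀ (by linarith) (by norm_num)]; linarith)
  have hD : 0 ≤ (2-p)^2 - 4*α*(1-p) := by nlinarith [sq_nonneg (1-p)]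
  set b : ℝ := Real.sqrt (α*(1-α)) with hbdef
  set s : ℝ := Real.sqrt ((2-p)^2 - 4*α*(1-p)) with hsdef
  have hb2 : b^2 = α*(1-α) := Real.sq_sqrt (by nlinarith)
  have hs2 : s^2 = (2-p)^2 - 4*α*(1-p) := Real.sq_sqrt hD
  set μ : ℝ := p/(d:ℝ)^2 with hμdef
  set a : ℝ := μ + 1 - p - α with hadef
  set c : ℝ := μ - 1 + α with hcdef
  set lp : ℝ := μ - p/2 + (1/2)*s with hlpdef
  set lm : ℝ := μ - p/2 - (1/2)*s with hlmdef
  refine ⟨hD, ?_⟩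
  -- the equivalence
  have h2sub : 2 + (d^2 - 2) = d^2 := by omega
  let e : Fin 2 ⊕ Fin (d^2 - 2) ≃ Fin (d^2) := finSumFinEquiv.trans (finCongr h2sub)
  have hvl : ∀ k : Fin 2, ((e (Sum.inl k)) : ℕ) = (k : ℕ) := by
    intro k; simp [e, finSumFinEquiv_apply_left]
  have hvr : ∀ k : Fin (d^2-2), ((e (Sum.inr k)) : ℕ) = 2 + (k : ℕ) := by
    intro k; simp [e, finSumFinEquiv_apply_right]
  let B : Matrix (Fin 2) (Fin 2) ℝ := !![a, -b; -b, c]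
  let Dm : Matrix (Fin (d^2-2)) (Fin (d^2-2)) ℝ := diagonal (fun _ => μ)
  have hblock : reindex e.symm e.symm A = fromBlocks B 0 0 Dm := by
    ext i j
    have hre : reindex e.symm e.symm A i j = A (e i) (e j) := by
      simp [reindex_apply, submatrix_apply]
    rw [hre, hAdef]
    rcases i with k | k <;> rcases j with l | l
    · have hk := hvl k; have hl := hvl l
      rw [Matrix.of_apply]
      fin_cases k <;> fin_cases l <;>
        · simp only [Fin.isValue, Fin.mk_zero, Fin.mk_one, Fin.val_zero, Fin.val_one] at hk hl ⊢
          split_ifs <;> first | (exfalso; omega) | (simp [fromBlocks, B])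
    · have hk := hvl k; have hl := hvr l
      have hne : e (Sum.inl k) ≠ e (Sum.inr l) := by
        intro h; have := congrArg Fin.val h; omega
      rw [Matrix.of_apply]
      split_ifs with h1 h2 h3 h4 <;>
        first | (exfalso; omega) | (exact absurd h4 hne) | (simp [fromBlocks]; done)
    · have hk := hvr k; have hl := hvl l
      have hne : e (Sum.inr k) ≠ e (Sum.inl l) := by
        intro h; have := congrArg Fin.val h; omega
      rw [Matrix.of_apply]
      split_ifs with h1 h2 h3 h4 <;>
        first | (exfalso; omega) | (exact absurd h4 hne) | (simp [fromBlocks]; done)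
    · have hk := hvr k; have hl := hvr l
      have hij : e (Sum.inr k) = e (Sum.inr l) ↔ k = l :=
        ⟨fun h => Sum.inr_injective (e.injective h), fun h => by rw [h]⟩
      rw [Matrix.of_apply]
      split_ifs with h1 h2 h3 h4
      · exfalso; omega
      · exfalso; omega
      · exfalso; omega
      · obtain rfl := hij.mp h4
        simp [fromBlocks, Dm]
      · have hkl : k ≠ l := fun h => h4 (hij.mpr h)
        simp [fromBlocks, Dm, diagonal_apply_ne _ hkl]
  have hsum : a + c = lp + lm := by
    rw [hadef, hcdef, hlpdef, hlmdef]; ring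
  have hprod : a * c - (-b) * (-b) = lp * lm := by
    rw [hadef, hcdef, hlpdef, hlmdef]
    linear_combination (-1 : ℝ) * hb2 + (1/4 : ℝ) * hs2
  have hBc : B.charpoly = (X - C lp) * (X - C lm) := by
    rw [Matrix.charpoly, Matrix.det_fin_two]
    rw [charmatrix_apply_eq, charmatrix_apply_eq,
      charmatrix_apply_ne _ _ _ (by decide), charmatrix_apply_ne _ _ _ (by decide)]
    have hB00 : B 0 0 = a := by simp [B]
    have hB11 : B 1 1 = c := by simp [B]
    have hB01 : B 0 1 = -b := by simp [B]
    have hB10 : B 1 0 = -b := by simp [B]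
    rw [hB00, hB11, hB01, hB10]
    have hCsum : C a + C c = C lp + C lm := by
      rw [← map_add, ← map_add, hsum]
    have hCprod : C a * C c - C (-b) * C (-b) = C lp * C lm := by
      simp only [← _root_.map_mul, ← map_sub]; rw [hprod]
    linear_combination (-(X : Polynomial ℝ)) * hCsum + hCprod
  have hDc : Dm.charpoly = (X - C μ)^(d^2-2) := by
    rw [my_charpoly_diagonal]
    simp [Finset.prod_const, Finset.card_univ]
  have hchar : A.charpoly = (X - C lp) * (X - C lm) * (X - C μ)^(d^2-2) := by
    rw [← Matrix.charpoly_reindex e.symm A, hblock, charpoly_fromBlocks_zero₂₁, hBc, hDc]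
  have hroots : A.charpoly.roots = lp ::ₘ lm ::ₘ Multiset.replicate (d^2-2) μ := by
    have h1 : A.charpoly =
        ((lp ::ₘ lm ::ₘ Multiset.replicate (d^2-2) μ).map fun x => X - C x).prod := by
      rw [hchar]
      simp [Multiset.map_cons, Multiset.map_replicate, Multiset.prod_cons,
        Multiset.prod_replicate, mul_assoc]
    rw [h1, Polynomial.roots_multiset_prod_X_sub_C]
  have heig : A.charpoly.roots = Finset.univ.val.map hA.eigenvalues := by
    have h1 : A.charpoly = ((Finset.univ.val.map hA.eigenvalues).map fun x => X - C x).prod := by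
      rw [herm_charpoly A hA, Finset.prod_eq_multiset_prod, Multiset.map_map]
      rfl
    rw [h1, Polynomial.roots_multiset_prod_X_sub_C]
  rw [← heig, hroots]
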